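/- Let x_i^j (i,j ∈ {-n,...,n}) be commuting variables, F_{i,j} = ∑_k ( x_i^k ∂/∂x_j^k - sign(i)·sign(j)·x_{-j}^k ∂/∂x_{-i}^k ) the realization of sp(2n) on polynomials, and for k ≤ n define the determinant a_{-n,...,-k} = det( x_i^j ) with rows i = -n,...,-k and columns j = -n,...,-n+(n-k). Then the polynomial v = ∏_{k=1}^{n} (a_{-n,...,-k})^{m_{-k} - m_{-k+1}} (with m_0 := 0) is a highest weight vector: F_{i,j} v = 0 for all i < j, and F_{-i,-i} v = m_{-i} v for i = 1,...,n. -/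

import Mathlib

open MvPolynomial

abbrev Idx (n : ℕ) := Fin n ⊕ Fin n

def negIdx {n : ℕ} : Idx n → Idx n := Sum.swap

def sgn {n : ℕ} : Idx n → ℂ := Sum.elim (fun _ => -1) (fun _ => 1)

/-- The integer value of an index: `Sum.inl a ↦ -(a+1)`, `Sum.inr a ↦ a+1`. -/
def idxVal {n : ℕ} : Idx n → ℤ :=
  Sum.elim (fun a => -(a.1 + 1 : ℤ)) (fun a => (a.1 + 1 : ℤ))

abbrev PolRing (n : ℕ) := MvPolynomial (Idx n × Idx n) ℂ

/-- The realization of `F_{i,j}` as a differential operator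
`∑_k ( x_i^k ∂/∂x_j^k - sign(i) sign(j) x_{-j}^k ∂/∂x_{-i}^k )`. -/
noncomputable def Fop {n : ℕ} (i j : Idx n) : Module.End ℂ (PolRing n) :=
  ∑ k : Idx n,
    (LinearMap.mulLeft ℂ (X (i, k)) * (pderiv (j, k)).toLinearMap
      - (sgn i * sgn j) •
        (LinearMap.mulLeft ℂ (X (negIdx j, k)) * (pderiv (negIdx i, k)).toLinearMap))

/-- The determinant `a_{-n,...,-k}` with rows `-n,...,-k` and columns `-n,...,-k`. -/
noncomputable def dmin (n k : ℕ) (hn : 1 ≤ n) : PolRing n :=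
  (Matrix.of fun r c : Fin (n + 1 - k) =>
    (X ((Sum.inl ⟨n - 1 - r.1, by omega⟩ : Idx n),
        (Sum.inl ⟨n - 1 - c.1, by omega⟩ : Idx n)) : PolRing n)).det

/-! ### Auxiliary lemmas -/

lemma dsum_apply {R A M : Type*} [CommSemiring R] [CommSemiring A] [Algebra R A]
    [AddCommMonoid M] [Module A M] [Module R M] {ι : Type*} (s : Finset ι)
    (f : ι → Derivation R A M) (a : A) : (∑ x ∈ s, f x) a = ∑ x ∈ s, f x a := by
  classical
  induction s using Finset.induction_on with
  | empty => simp
  | insert _ _ ha ih => rename_i b s; simp [Finset.sum_insert ha, ih]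

/-- `Fop i j` as a derivation. -/
noncomputable def FopD {n : ℕ} (i j : Idx n) : Derivation ℂ (PolRing n) (PolRing n) :=
  ∑ k : Idx n, ((X (i, k) : PolRing n) • pderiv (j, k)
      - (sgn i * sgn j) • ((X (negIdx j, k) : PolRing n) • pderiv (negIdx i, k)))

lemma Fop_apply {n : ℕ} (i j : Idx n) (p : PolRing n) : Fop i j p = FopD i j p := by
  simp [Fop, FopD, LinearMap.sum_apply, dsum_apply, smul_smul, mul_comm]

lemma FopD_X {n : ℕ} (i j p s : Idx n) :
    FopD i j (X (p, s)) = (if j = p then X (i, s) else 0)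
      - (sgn i * sgn j) • (if negIdx i = p then (X (negIdx j, s) : PolRing n) else 0) := by
  classical
  rw [FopD, dsum_apply]
  simp only [Derivation.sub_apply, Derivation.smul_apply, pderiv_X, smul_eq_mul]
  rw [Finset.sum_sub_distrib]
  congr 1
  · rw [Finset.sum_eq_single s]
    · by_cases h : j = p <;> simp [h, Pi.single_apply, Prod.ext_iff]
    · intro b _ hb
      by_cases h : j = p <;> simp [h, Pi.single_apply, Prod.ext_iff, hb, Ne.symm hb]
    · simp
  · rw [← Finset.smul_sum]
    congr 1
    rw [Finset.sum_eq_single s]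
    · by_cases h : negIdx i = p <;> simp [h, Pi.single_apply, Prod.ext_iff]
    · intro b _ hb
      by_cases h : negIdx i = p <;> simp [h, Pi.single_apply, Prod.ext_iff, hb, Ne.symm hb]
    · simp

lemma deriv_prod {R A : Type*} [CommRing R] [CommRing A] [Algebra R A]
    {ι : Type*} [DecidableEq ι] (D : Derivation R A A) (s : Finset ι) (f : ι → A) :
    D (∏ x ∈ s, f x) = ∑ x ∈ s, D (f x) * ∏ y ∈ s.erase x, f y := by
  induction s using Finset.induction_on with
  | empty => simp
  | insert _ _ ha ih =>
    rename_i a s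
    have h : ∀ x ∈ s, f a * (D (f x) * ∏ y ∈ s.erase x, f y)
        = D (f x) * ∏ y ∈ (insert a s).erase x, f y := by
      intro x hx
      rw [Finset.erase_insert_of_ne (by rintro rfl; exact ha hx),
        Finset.prod_insert (fun h => ha (Finset.mem_of_mem_erase h))]
      ring
    rw [Finset.prod_insert ha, D.leibniz, ih, smul_eq_mul, smul_eq_mul, Finset.mul_sum,
      Finset.sum_insert ha, Finset.erase_insert ha, Finset.sum_congr rfl h]
    ring

lemma deriv_det {R A : Type*} [CommRing R] [CommRing A] [Algebra R A]
    {N : ℕ} (D : Derivation R A A) (M : Matrix (Fin N) (Fin N) A) :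
    D M.det = ∑ r, (M.updateRow r fun c => D (M r c)).det := by
  rw [Matrix.det_apply, map_sum]
  have key : ∀ σ : Equiv.Perm (Fin N),
      D (Equiv.Perm.sign σ • ∏ i, M (σ i) i)
        = ∑ ρ, Equiv.Perm.sign σ •
            (D (M ρ (σ.symm ρ)) * ∏ i ∈ Finset.univ.erase (σ.symm ρ), M (σ i) i) := by
    intro σ
    rw [Units.smul_def, map_zsmul, deriv_prod]
    rw [← Equiv.sum_comp σ.symm
      (fun r => D (M (σ r) r) * ∏ y ∈ Finset.univ.erase r, M (σ y) y)]
    rw [Finset.smul_sum]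
    refine Finset.sum_congr rfl fun ρ _ => ?_
    rw [Units.smul_def, Equiv.apply_symm_apply]
  rw [Finset.sum_congr rfl fun σ _ => key σ, Finset.sum_comm]
  refine Finset.sum_congr rfl fun ρ _ => ?_
  rw [Matrix.det_apply]
  refine Finset.sum_congr rfl fun σ _ => ?_
  congr 1
  have h1 : (Finset.univ : Finset (Fin N)) = insert (σ.symm ρ) (Finset.univ.erase (σ.symm ρ)) := by
    rw [Finset.insert_erase (Finset.mem_univ _)]
  conv_rhs => rw [h1]
  rw [Finset.prod_insert (Finset.notMem_erase _ _), Equiv.apply_symm_apply,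
    Matrix.updateRow_self]
  congr 1
  refine Finset.prod_congr rfl fun i hi => ?_
  rw [Matrix.updateRow_ne]
  intro h
  exact (Finset.mem_erase.mp hi).1 (by rw [← h, Equiv.symm_apply_apply])

def rowIdx (n k : ℕ) (hn : 1 ≤ n) (r : Fin (n + 1 - k)) : Idx n :=
  Sum.inl ⟨n - 1 - r.1, by omega⟩

noncomputable def dmat (n k : ℕ) (hn : 1 ≤ n) :
    Matrix (Fin (n+1-k)) (Fin (n+1-k)) (PolRing n) :=
  Matrix.of fun r c => X (rowIdx n k hn r, rowIdx n k hn c)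

lemma dmin_eq (n k : ℕ) (hn : 1 ≤ n) : dmin n k hn = (dmat n k hn).det := rfl

lemma rowIdx_surj {n k : ℕ} (hn : 1 ≤ n) (t : Fin n) (ht : k ≤ t.1 + 1) :
    rowIdx n k hn ⟨n - 1 - t.1, by omega⟩ = Sum.inl t := by
  simp only [rowIdx, Sum.inl.injEq]
  ext
  simp only
  omega

lemma FopD_dmin_lt {n : ℕ} (hn : 1 ≤ n) {i j : Idx n} (hij : idxVal i < idxVal j)
    {k : ℕ} (hk1 : 1 ≤ k) (hkn : k ≤ n) :
    FopD i j (dmin n k hn) = 0 := by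
  rw [dmin_eq, deriv_det]
  apply Finset.sum_eq_zero
  intro r _
  have hc : ∀ c, FopD i j (dmat n k hn r c)
      = (if j = rowIdx n k hn r then (X (i, rowIdx n k hn c) : PolRing n) else 0)
        - (sgn i * sgn j) •
          (if negIdx i = rowIdx n k hn r then (X (negIdx j, rowIdx n k hn c) : PolRing n)
           else 0) := fun c => FopD_X i j _ _
  have hrlt : r.1 < n + 1 - k := r.2
  by_cases hj : j = rowIdx n k hn r
  · by_cases hni : negIdx i = rowIdx n k hn r
    · exfalso
      have hij' := hni.trans hj.symm
      rcases i with a | a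
      · rw [hj] at hij'
        simp [negIdx, rowIdx] at hij'
      · have : Sum.inl a = j := by simpa [negIdx] using hij'
        rw [← this] at hij
        simp [idxVal] at hij
        omega
    · rcases i with a | a
      · have hb : n - 1 - r.1 < a.1 := by
          rw [hj] at hij
          simp only [idxVal, rowIdx, Sum.elim_inl] at hij
          omega
        have har : a.1 < n := a.2
        have hr' : rowIdx n k hn ⟨n - 1 - a.1, by omega⟩ = Sum.inl a :=
          rowIdx_surj hn a (by omega)
        have hrow : (fun c => FopD (Sum.inl a) j (dmat n k hn r c))
            = dmat n k hn ⟨n - 1 - a.1, by omega⟩ := by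
          funext c
          rw [hc, if_pos hj, if_neg hni, smul_zero, sub_zero]
          simp only [dmat, Matrix.of_apply, hr']
        rw [hrow]
        exact Matrix.det_updateRow_eq_zero (Fin.ne_of_val_ne (by simp; omega))
      · exfalso
        rw [hj] at hij
        simp only [idxVal, rowIdx, Sum.elim_inr, Sum.elim_inl] at hij
        omega
  · by_cases hni : negIdx i = rowIdx n k hn r
    · rcases i with a | a
      · exfalso
        simp [negIdx, rowIdx] at hni
      · rcases j with b | b
        · exfalso
          simp only [idxVal, Sum.elim_inr, Sum.elim_inl] at hij
          omega
        · have hab : a.1 < b.1 := by simpa [idxVal] using hij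
          have han : a.1 = n - 1 - r.1 := by
            simpa [negIdx, rowIdx, Fin.ext_iff] using hni
          have hbn : b.1 < n := b.2
          have hr'' : rowIdx n k hn ⟨n - 1 - b.1, by omega⟩ = Sum.inl b :=
            rowIdx_surj hn b (by omega)
          have hrow : (fun c => FopD (Sum.inr a) (Sum.inr b) (dmat n k hn r c))
              = (C (-(sgn (Sum.inr a : Idx n) * sgn (Sum.inr b : Idx n))) : PolRing n)
                  • dmat n k hn ⟨n - 1 - b.1, by omega⟩ := by
            funext c
            rw [hc, if_neg hj, if_pos hni, zero_sub]
            simp only [dmat, Matrix.of_apply, Pi.smul_apply, negIdx, Sum.swap_inr, hr'']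
            rw [smul_eq_C_mul, ← neg_mul, ← C_neg, smul_eq_mul]
          rw [hrow, Matrix.det_updateRow_smul,
            Matrix.det_updateRow_eq_zero (Fin.ne_of_val_ne (by simp; omega)), mul_zero]
    · have hrow : (fun c => FopD i j (dmat n k hn r c)) = 0 := by
        funext c
        rw [hc, if_neg hj, if_neg hni, smul_zero, sub_zero]
        simp
      rw [hrow]
      exact Matrix.det_eq_zero_of_row_eq_zero r fun c => by simp

lemma FopD_dmin_diag {n : ℕ} (hn : 1 ≤ n) (a : Fin n) {k : ℕ} (hk1 : 1 ≤ k) (hkn : k ≤ n) :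
    FopD (Sum.inl a) (Sum.inl a) (dmin n k hn)
      = (if k ≤ a.1 + 1 then (1 : ℂ) else 0) • dmin n k hn := by
  classical
  rw [dmin_eq, deriv_det]
  have hterm : ∀ r : Fin (n+1-k),
      ((dmat n k hn).updateRow r fun c => FopD (Sum.inl a) (Sum.inl a) (dmat n k hn r c)).det
        = if (Sum.inl a : Idx n) = rowIdx n k hn r then (dmat n k hn).det else 0 := by
    intro r
    have hc : ∀ c, FopD (Sum.inl a) (Sum.inl a) (dmat n k hn r c)
        = (if (Sum.inl a : Idx n) = rowIdx n k hn r then (X (Sum.inl a, rowIdx n k hn c) : PolRing n) else 0)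
          - (sgn (Sum.inl a : Idx n) * sgn (Sum.inl a : Idx n)) •
            (if negIdx (Sum.inl a : Idx n) = rowIdx n k hn r then
              (X (negIdx (Sum.inl a : Idx n), rowIdx n k hn c) : PolRing n) else 0) :=
      fun c => FopD_X _ _ _ _
    have hninl : negIdx (Sum.inl a : Idx n) ≠ rowIdx n k hn r := by
      simp [negIdx, rowIdx]
    by_cases h : (Sum.inl a : Idx n) = rowIdx n k hn r
    · rw [if_pos h]
      have hrow : (fun c => FopD (Sum.inl a) (Sum.inl a) (dmat n k hn r c)) = dmat n k hn r := by
        funext c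
        rw [hc, if_pos h, if_neg hninl, smul_zero, sub_zero, h]
        rfl
      rw [hrow, Matrix.updateRow_eq_self]
    · rw [if_neg h]
      have hrow : (fun c => FopD (Sum.inl a) (Sum.inl a) (dmat n k hn r c)) = 0 := by
        funext c
        rw [hc, if_neg h, if_neg hninl, smul_zero, sub_zero]
        simp
      rw [hrow]
      exact Matrix.det_eq_zero_of_row_eq_zero r fun c => by simp
  rw [Finset.sum_congr rfl fun r _ => hterm r]
  by_cases hk : k ≤ a.1 + 1
  · have han : a.1 < n := a.2
    have hr0 : rowIdx n k hn ⟨n - 1 - a.1, by omega⟩ = Sum.inl a := rowIdx_surj hn a hk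
    have hiff : ∀ r : Fin (n+1-k),
        ((Sum.inl a : Idx n) = rowIdx n k hn r) ↔ (⟨n - 1 - a.1, by omega⟩ : Fin (n+1-k)) = r := by
      intro r
      constructor
      · intro h
        have : n - 1 - r.1 = a.1 := by
          have := h.symm
          simp only [rowIdx, Sum.inl.injEq, Fin.ext_iff] at this
          exact this
        have hr2 : r.1 < n + 1 - k := r.2
        exact Fin.ext (by simp; omega)
      · rintro rfl
        exact hr0.symm
    simp only [hiff]
    rw [Finset.sum_ite_eq, if_pos (Finset.mem_univ _), if_pos hk, one_smul]
  · simp only [if_neg hk, zero_smul]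
    apply Finset.sum_eq_zero
    intro r _
    have hne : (Sum.inl a : Idx n) ≠ rowIdx n k hn r := by
      intro h
      have hr2 : r.1 < n + 1 - k := r.2
      simp only [rowIdx, Sum.inl.injEq, Fin.ext_iff] at h
      omega
    rw [if_neg hne]

lemma icc_succ (s : ℕ) : Finset.Icc 1 (s+1) = insert (s+1) (Finset.Icc 1 s) := by
  ext x
  simp only [Finset.mem_Icc, Finset.mem_insert]
  omega

lemma telescope (m : ℕ → ℕ) (hm0 : m 0 = 0) (n : ℕ) (hmono : ∀ k, k < n → m k ≤ m (k+1)) :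
    ∀ N, N ≤ n → ∑ k ∈ Finset.Icc 1 N, (m k - m (k-1)) = m N := by
  intro N
  induction N with
  | zero => intro _; simpa using hm0.symm
  | succ s ih =>
    intro hs
    have hns : s + 1 ∉ Finset.Icc 1 s := by simp
    rw [icc_succ, Finset.sum_insert hns, ih (by omega)]
    have := hmono s (by omega)
    simp only [Nat.add_sub_cancel]
    omega

theorem stmt6 (n : ℕ) (hn : 1 ≤ n) (m : ℕ → ℕ) (hm0 : m 0 = 0)
    (hmono : ∀ k, k < n → m k ≤ m (k + 1))
    (v : PolRing n)
    (hv : v = ∏ k ∈ Finset.Icc 1 n, dmin n k hn ^ (m k - m (k - 1))) :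
    (∀ i j : Idx n, idxVal i < idxVal j → Fop i j v = 0) ∧
    (∀ a : Fin n, Fop (Sum.inl a) (Sum.inl a) v = ((m (a.1 + 1) : ℂ)) • v) := by
  classical
  constructor
  · intro i j hij
    rw [Fop_apply, hv, deriv_prod]
    apply Finset.sum_eq_zero
    intro k hk
    rw [Finset.mem_Icc] at hk
    rw [Derivation.leibniz_pow, FopD_dmin_lt hn hij hk.1 hk.2, smul_zero, smul_zero, zero_mul]
  · intro a
    rw [Fop_apply, hv, deriv_prod]
    have hsm : ∀ (e : ℕ) (c : ℂ) (d : PolRing n),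
        (e • d ^ (e - 1) • (c • d)) = ((e : ℂ) * c) • d ^ e := by
      intro e c d
      cases e with
      | zero => simp
      | succ s =>
        have h2 : d ^ s • (c • d) = c • d ^ (s + 1) := by
          rw [smul_comm, smul_eq_mul, ← pow_succ]
        rw [Nat.succ_sub_one, h2, ← Nat.cast_smul_eq_nsmul ℂ, smul_smul]
    have key : ∀ k ∈ Finset.Icc 1 n,
        FopD (Sum.inl a) (Sum.inl a) (dmin n k hn ^ (m k - m (k - 1)))
            * ∏ l ∈ (Finset.Icc 1 n).erase k, dmin n l hn ^ (m l - m (l - 1))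
          = (((m k - m (k - 1) : ℕ) : ℂ) * (if k ≤ a.1 + 1 then 1 else 0))
              • ∏ l ∈ Finset.Icc 1 n, dmin n l hn ^ (m l - m (l - 1)) := by
      intro k hk
      have hk' := Finset.mem_Icc.mp hk
      rw [Derivation.leibniz_pow, FopD_dmin_diag hn a hk'.1 hk'.2, hsm, smul_mul_assoc,
        Finset.mul_prod_erase (Finset.Icc 1 n) (fun l => dmin n l hn ^ (m l - m (l - 1))) hk]
    rw [Finset.sum_congr rfl key, ← Finset.sum_smul]
    congr 1
    have h1 : ∀ k ∈ Finset.Icc 1 n,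
        ((m k - m (k - 1) : ℕ) : ℂ) * (if k ≤ a.1 + 1 then 1 else 0)
          = if k ≤ a.1 + 1 then ((m k - m (k - 1) : ℕ) : ℂ) else 0 := by
      intro k _; rw [mul_ite, mul_one, mul_zero]
    rw [Finset.sum_congr rfl h1, ← Finset.sum_filter]
    have hfil : (Finset.Icc 1 n).filter (fun k => k ≤ a.1 + 1) = Finset.Icc 1 (a.1 + 1) := by
      ext x
      have := a.2
      simp only [Finset.mem_filter, Finset.mem_Icc]
      omega
    rw [hfil, ← Nat.cast_sum, telescope m hm0 n hmono (a.1 + 1) a.2]
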